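/- Let p be a prime and R a Noetherian commutative ring of characteristic p whose Frobenius endomorphism r ↦ r^p is flat (for example, a regular ring). Fix e ≥ 1 and let (M,F) be a finitely generated unit R[F^e]-module with root M₀. Then every unit R[F^e]-submodule N of M (i.e. every R-submodule N with R·F(N) = N) is itself a finitely generated unit R[F^e]-module; in fact M₀ ∩ N is a root of (N, F restricted to N). -/

import Mathlib

open TensorProduct

/-- A copy of `R` whose `R`-module structure is twisted by the ring endomorphism `φ`:
`r • r' = φ r * r'`.  For `φ` the `e`-th Frobenius iterate this is the bimodule `R^e`
of Lyubeznik/Blickle, i.e. the left tensor factor of the Frobenius functor `F^{e*}`. -/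
def Twisted (R : Type) [CommRing R] (φ : R →+* R) : Type := R

instance (R : Type) [CommRing R] (φ : R →+* R) : AddCommGroup (Twisted R φ) :=
  inferInstanceAs (AddCommGroup R)

instance (R : Type) [CommRing R] (φ : R →+* R) : Module R (Twisted R φ) :=
  Module.compHom R φ

/-- The element of the twisted copy of `R` corresponding to `r`. -/
def tw {R : Type} [CommRing R] (φ : R →+* R) (r : R) : Twisted R φ := r

/-- `R·F(N)` : the `R`-submodule of `M` generated by the image of `N` under `F`.
`R·F^j(N)` is its `j`-fold iterate `(spanF F)^[j] N`. -/
def spanF {R M : Type} [CommRing R] [AddCommGroup M] [Module R M]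
    (F : M → M) (N : Submodule R M) : Submodule R M :=
  Submodule.span R (F '' (N : Set M))

/-- `(M, F)` is a *unit* `R[Fᵉ]`-module: the linearization
`θ : R ⊗_φ M → M`, `r ⊗ m ↦ r • F m`, is bijective. -/
def IsUnitFModule {R M : Type} [CommRing R] [AddCommGroup M] [Module R M]
    (φ : R →+* R) (F : M → M) : Prop :=
  ∃ θ : Twisted R φ ⊗[R] M →+ M,
    (∀ (r : R) (m : M), θ (tw φ r ⊗ₜ[R] m) = r • F m) ∧ Function.Bijective θ

/-- `(M, F)` is a finitely generated `R[Fᵉ]`-module: there is a finite subset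
`S ⊆ M` such that the elements `F^[j] s`, `j ≥ 0`, `s ∈ S`, generate `M` as an
`R`-module. -/
def IsFGFModule (R : Type) {M : Type} [CommRing R] [AddCommGroup M] [Module R M]
    (F : M → M) : Prop :=
  ∃ S : Finset M, Submodule.span R (⋃ j : ℕ, F^[j] '' (S : Set M)) = ⊤

section Aux

open LinearMap

/-- The untwisting of an element of the twisted copy of `R`. -/
def untw {R : Type} [CommRing R] {φ : R →+* R} (t : Twisted R φ) : R := t

variable {R M : Type} [CommRing R] [AddCommGroup M] [Module R M]

/-- Multiplication by `r` (untwisted!) is `R`-linear on `Twisted R φ`. -/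
def mulTw (φ : R →+* R) (r : R) : Twisted R φ →ₗ[R] Twisted R φ where
  toFun t := tw φ (r * untw t)
  map_add' x y := mul_add r (untw x) (untw y)
  map_smul' s t := mul_left_comm r (φ s) (untw t)

lemma theta_mulTw {φ : R →+* R} (F : M → M)
    (θ : Twisted R φ ⊗[R] M →+ M)
    (hθ : ∀ (r : R) (m : M), θ (tw φ r ⊗ₜ[R] m) = r • F m)
    (r : R) (y : Twisted R φ ⊗[R] M) :
    θ (rTensor M (mulTw φ r) y) = r • θ y := by
  induction y using TensorProduct.induction_on with
  | zero => simp
  | tmul t m =>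
      rw [rTensor_tmul]
      have h1 : θ ((mulTw φ r) t ⊗ₜ[R] m) = (r * untw t) • F m := hθ (r * untw t) m
      have h2 : θ (t ⊗ₜ[R] m) = untw t • F m := hθ (untw t) m
      rw [h1, h2, mul_smul]
  | add x y hx hy => rw [map_add, map_add, map_add, hx, hy, smul_add]

lemma mem_spanF_iff {φ : R →+* R} (F : M → M)
    (θ : Twisted R φ ⊗[R] M →+ M)
    (hθ : ∀ (r : R) (m : M), θ (tw φ r ⊗ₜ[R] m) = r • F m)
    (A : Submodule R M) (m : M) :
    m ∈ spanF F A ↔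
      ∃ x : Twisted R φ ⊗[R] ↥A, θ (lTensor (Twisted R φ) A.subtype x) = m := by
  constructor
  · intro hm
    refine Submodule.span_induction ?_ ?_ ?_ ?_ hm
    · rintro _ ⟨a, ha, rfl⟩
      exact ⟨tw φ 1 ⊗ₜ[R] ⟨a, ha⟩, by rw [lTensor_tmul]; simpa using hθ 1 a⟩
    · exact ⟨0, by rw [map_zero, map_zero]⟩
    · rintro x y hx hy ⟨u, rfl⟩ ⟨v, rfl⟩
      exact ⟨u + v, by rw [map_add, map_add]⟩
    · rintro r x hx ⟨u, rfl⟩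
      refine ⟨rTensor ↥A (mulTw φ r) u, ?_⟩
      have hcomm : lTensor (Twisted R φ) A.subtype (rTensor ↥A (mulTw φ r) u)
          = rTensor M (mulTw φ r) (lTensor (Twisted R φ) A.subtype u) := by
        rw [← LinearMap.comp_apply, ← LinearMap.comp_apply, lTensor_comp_rTensor,
          rTensor_comp_lTensor]
      rw [hcomm, theta_mulTw F θ hθ]
  · rintro ⟨x, rfl⟩
    induction x using TensorProduct.induction_on with
    | zero => rw [map_zero, map_zero]; exact Submodule.zero_mem _
    | tmul t a =>
        rw [lTensor_tmul]
        have h2 : θ (tw φ (untw t) ⊗ₜ[R] (a : M)) = untw t • F (a : M) := hθ (untw t) (a : M)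
        rw [show (t ⊗ₜ[R] (A.subtype a) : Twisted R φ ⊗[R] M) = tw φ (untw t) ⊗ₜ[R] (a : M)
          from rfl, h2]
        exact Submodule.smul_mem _ _ (Submodule.subset_span ⟨(a : M), a.2, rfl⟩)
    | add x y hx hy => rw [map_add, map_add]; exact Submodule.add_mem _ hx hy

lemma range_lTensor_inf {T : Type} [AddCommGroup T] [Module R T] [Module.Flat R T]
    (A B : Submodule R M) :
    range (lTensor T (A ⊓ B).subtype)
      = range (lTensor T A.subtype) ⊓ range (lTensor T B.subtype) := by
  apply le_antisymm
  · apply le_inf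
    · rw [← Submodule.subtype_comp_inclusion (A ⊓ B) A inf_le_left, lTensor_comp]
      exact LinearMap.range_comp_le_range _ _
    · rw [← Submodule.subtype_comp_inclusion (A ⊓ B) B inf_le_right, lTensor_comp]
      exact LinearMap.range_comp_le_range _ _
  · rintro z ⟨⟨u, rfl⟩, ⟨v, hv⟩⟩
    set g : ↥A →ₗ[R] M ⧸ B := B.mkQ.comp A.subtype with hg
    have hexact : Function.Exact (Submodule.inclusion (inf_le_left : A ⊓ B ≤ A)) g := by
      intro a
      constructor
      · intro ha
        have haB : (a : M) ∈ B := by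
          simpa [g, Submodule.Quotient.mk_eq_zero] using ha
        exact ⟨⟨(a : M), ⟨a.2, haB⟩⟩, rfl⟩
      · rintro ⟨w, rfl⟩
        have hwB : ((Submodule.inclusion (inf_le_left : A ⊓ B ≤ A) w : ↥A) : M) ∈ B :=
          (Submodule.mem_inf.mp w.2).2
        simpa [g, Submodule.Quotient.mk_eq_zero] using hwB
    have h2 : Function.Exact (lTensor T B.subtype) (lTensor T B.mkQ) :=
      Module.Flat.lTensor_exact T (LinearMap.exact_subtype_mkQ B)
    have h3 := Module.Flat.lTensor_exact T hexact
    have hz0 : lTensor T B.mkQ (lTensor T A.subtype u) = 0 := by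
      rw [← hv]
      exact (h2 _).mpr ⟨v, rfl⟩
    have hgu : lTensor T g u = 0 := by
      rw [hg, lTensor_comp]
      exact hz0
    obtain ⟨w, hw⟩ := (h3 u).mp hgu
    refine ⟨w, ?_⟩
    rw [← Submodule.subtype_comp_inclusion (A ⊓ B) A inf_le_left, lTensor_comp,
      LinearMap.comp_apply, hw]

lemma spanF_inf {φ : R →+* R} (F : M → M) [Module.Flat R (Twisted R φ)]
    (θ : Twisted R φ ⊗[R] M →+ M)
    (hθ : ∀ (r : R) (m : M), θ (tw φ r ⊗ₜ[R] m) = r • F m)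
    (hinj : Function.Injective θ) (A B : Submodule R M) :
    spanF F (A ⊓ B) = spanF F A ⊓ spanF F B := by
  apply le_antisymm
  · exact le_inf
      (Submodule.span_mono (Set.image_mono fun x hx => (Submodule.mem_inf.mp hx).1))
      (Submodule.span_mono (Set.image_mono fun x hx => (Submodule.mem_inf.mp hx).2))
  · rintro m ⟨hA, hB⟩
    obtain ⟨x, hx⟩ := (mem_spanF_iff F θ hθ A m).mp hA
    obtain ⟨y, hy⟩ := (mem_spanF_iff F θ hθ B m).mp hB
    have hxy : lTensor (Twisted R φ) A.subtype x = lTensor (Twisted R φ) B.subtype y :=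
      hinj (by rw [hx, hy])
    have hmem : lTensor (Twisted R φ) A.subtype x
        ∈ range (lTensor (Twisted R φ) (A ⊓ B).subtype) := by
      rw [range_lTensor_inf]
      exact ⟨⟨x, rfl⟩, ⟨y, hxy.symm⟩⟩
    obtain ⟨w, hw⟩ := hmem
    exact (mem_spanF_iff F θ hθ (A ⊓ B) m).mpr ⟨w, by rw [hw, hx]⟩

end Aux

/-- Over a Noetherian ring of characteristic `p` with flat
Frobenius, a unit `R[Fᵉ]`-submodule `N` of a finitely generated unit
`R[Fᵉ]`-module with root `M₀` is itself a finitely generated unit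
`R[Fᵉ]`-module (i.e. it is unit and has a root); in fact `M₀ ⊓ N` is a root of
`(N, F|_N)`. -/
theorem unit_submodule_fg_with_root
    (p : ℕ) [Fact p.Prime]
    (R : Type) [CommRing R] [IsNoetherianRing R] [CharP R p]
    (φp : R →+* R) (hφp : ∀ r : R, φp r = r ^ p) (hflat : φp.Flat)
    (M : Type) [AddCommGroup M] [Module R M]
    (e : ℕ) (he : 1 ≤ e)
    (φ : R →+* R) (hφ : ∀ r : R, φ r = r ^ p ^ e)
    (F : M → M) (hFadd : ∀ x y : M, F (x + y) = F x + F y)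
    (hFsl : ∀ (r : R) (m : M), F (r • m) = r ^ p ^ e • F m)
    (hunit : IsUnitFModule φ F)
    (M₀ : Submodule R M) (hroot : M₀.FG ∧ M₀ ≤ spanF F M₀ ∧
      ∀ m : M, ∃ j : ℕ, m ∈ (spanF F)^[j] M₀)
    (N : Submodule R M) (hN : spanF F N = N) :
    IsUnitFModule (M := ↥N) φ
      (fun x : N => (⟨F x.1,
        (SetLike.ext_iff.mp hN (F x.1)).mp
          (Submodule.subset_span ⟨x.1, x.2, rfl⟩)⟩ : N)) ∧
    (M₀ ⊓ N).FG ∧ (M₀ ⊓ N) ≤ spanF F (M₀ ⊓ N) ∧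
      ∀ m ∈ N, ∃ j : ℕ, m ∈ (spanF F)^[j] (M₀ ⊓ N) := by
  obtain ⟨θ, hθ, hbij⟩ := hunit
  -- `φ` is flat
  have key : ∀ n : ℕ, ∃ ψ : R →+* R, (∀ r : R, ψ r = r ^ p ^ n) ∧ ψ.Flat := by
    intro n
    induction n with
    | zero =>
        exact ⟨RingHom.id R, fun r => by simp, RingHom.Flat.id R⟩
    | succ n ih =>
        obtain ⟨ψ, hψ, hψflat⟩ := ih
        refine ⟨ψ.comp φp, fun r => ?_, ?_⟩
        · rw [RingHom.comp_apply, hφp, hψ, ← pow_mul, pow_succ']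
        · haveI := hflat
          haveI := hψflat
          exact RingHom.Flat.comp hflat hψflat
  obtain ⟨ψ, hψ, hψflat⟩ := key e
  have hφψ : φ = ψ := RingHom.ext fun r => (hφ r).trans (hψ r).symm
  have hφflat : φ.Flat := hφψ ▸ hψflat
  haveI : Module.Flat R (Twisted R φ) := hφflat
  -- set-up
  have hspanF_inf := fun A B => spanF_inf F θ hθ hbij.1 A B
  have hjN_inj : Function.Injective (LinearMap.lTensor (Twisted R φ) N.subtype) :=
    Module.Flat.lTensor_preserves_injective_linearMap N.subtype N.injective_subtype
  refine ⟨?_, ?_, ?_, ?_⟩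
  · -- unit
    set J := (LinearMap.lTensor (Twisted R φ) N.subtype).toAddMonoidHom with hJ
    have himg : ∀ x : Twisted R φ ⊗[R] ↥N, (θ.comp J) x ∈ N := by
      intro x
      have : (θ.comp J) x ∈ spanF F N :=
        (mem_spanF_iff F θ hθ N _).mpr ⟨x, rfl⟩
      rwa [hN] at this
    refine ⟨AddMonoidHom.codRestrict (θ.comp J) N himg, ?_, ?_, ?_⟩
    · intro r n
      refine Subtype.ext ?_
      show θ (LinearMap.lTensor (Twisted R φ) N.subtype (tw φ r ⊗ₜ[R] n)) = r • F (n : M)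
      rw [LinearMap.lTensor_tmul]
      exact hθ r (n : M)
    · intro a b hab
      have h1 : θ (LinearMap.lTensor (Twisted R φ) N.subtype a)
          = θ (LinearMap.lTensor (Twisted R φ) N.subtype b) := congrArg Subtype.val hab
      exact hjN_inj (hbij.1 h1)
    · rintro ⟨m, hm⟩
      have hm' : m ∈ spanF F N := by rw [hN]; exact hm
      obtain ⟨x, hx⟩ := (mem_spanF_iff F θ hθ N m).mp hm'
      exact ⟨x, Subtype.ext hx⟩
  · -- finitely generated
    haveI : IsNoetherian R ↥M₀ := isNoetherian_of_fg_of_noetherian M₀ hroot.1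
    have h1 := IsNoetherian.noetherian (Submodule.comap M₀.subtype (M₀ ⊓ N))
    have h2 := h1.map M₀.subtype
    rw [Submodule.map_comap_subtype, ← inf_assoc, inf_idem] at h2
    exact h2
  · -- M₀ ⊓ N ≤ spanF F (M₀ ⊓ N)
    rw [hspanF_inf, hN]
    exact inf_le_inf_right N hroot.2.1
  · -- root generates
    have hiter : ∀ j : ℕ, (spanF F)^[j] (M₀ ⊓ N) = (spanF F)^[j] M₀ ⊓ N := by
      intro j
      induction j with
      | zero => rfl
      | succ j ih =>
          rw [Function.iterate_succ_apply', Function.iterate_succ_apply', ih,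
            hspanF_inf, hN]
    intro m hmN
    obtain ⟨j, hj⟩ := hroot.2.2 m
    exact ⟨j, by rw [hiter]; exact ⟨hj, hmN⟩⟩
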